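/- Let s ∈ ℂ. Let f_a : (-1,∞) → V, f_b : (-∞,1) → V and f_c : (0,∞) → V be arbitrary functions. Then the pair (f_a, f_b) satisfies the reduced transfer-operator eigenfunction equations (Ra) f_a(x) = χ(k₁)⁻¹ f_a(x+2) + ((x+2)²)^(−s) χ(k₂) ( f_a(−1/(x+2)) + f_b(−1/(x+2)) ) for all x ∈ (−1,∞), and (Rb) f_b(x) = ((x−2)²)^(−s) χ(k₃) ( f_a(−1/(x−2)) + f_b(−1/(x−2)) ) + χ(k₁) f_b(x−2) for all x ∈ (−∞,1), if and only if the triple (f_a, f_b, f_c) with f_c defined by f_c(x) = f_a(x) + (x²)^(−s) χ(k₄) f_b(−1/x) for x ∈ (0,∞) satisfies the original transfer-operator eigenfunction equations (Ea) f_a(x) = ((x+2)²)^(−s) χ(k₂) f_a(−1/(x+2)) + χ(k₁)⁻¹ f_c(x+2) for all x ∈ (−1,∞), (Eb) f_b(x) = ((x−2)²)^(−s) χ(k₃) ( f_b(−1/(x−2)) + f_c(−1/(x−2)) ) for all x ∈ (−∞,1), and (Ec) f_c(x) = f_a(x) + (x²)^(−s) χ(k₄) f_b(−1/x) for all x ∈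 (0,∞). In other words, (f_a,f_b) ↔ (f_a,f_b,f_c) is a bijection between the 1-eigenfunction vectors of the reduced transfer operator for the Theta group and those of the original transfer operator. -/

import Mathlib

/-!
STATEMENT 0: Equivalence between the 1-eigenfunction vectors of the reduced slow
transfer operator of the Theta group `Γ₂` and those of the original slow transfer
operator, for an arbitrary unitary finite-dimensional representation `(V, χ)`.
-/

open Matrix Complex

noncomputable section

abbrev SL2R := Matrix.SpecialLinearGroup (Fin 2) ℝ

def Smat : SL2R := ⟨!![0, 1; -1, 0], by norm_num [Matrix.det_fin_two_of]⟩

def Tmat (lam : ℝ) : SL2R := ⟨!![1, lam; 0, 1], by norm_num [Matrix.det_fin_two_of]⟩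

/-- The Theta group `Γ₂`, the subgroup of `SL(2,ℝ)` generated by
`S = [[0,1],[-1,0]]` and `T = [[1,2],[0,1]]`. -/
def ThetaGroup : Subgroup SL2R := Subgroup.closure {Smat, Tmat 2}

def k1 : ThetaGroup := ⟨Tmat 2, Subgroup.subset_closure (by simp)⟩
def k4 : ThetaGroup := ⟨Smat, Subgroup.subset_closure (by simp)⟩
def k2 : ThetaGroup := k1⁻¹ * k4
def k3 : ThetaGroup := k1 * k4

theorem theta_reduced_iff_original
    {V : Type} [NormedAddCommGroup V] [InnerProductSpace ℂ V] [FiniteDimensional ℂ V]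
    (χ : ThetaGroup →* (V ≃ₗᵢ[ℂ] V))
    (hχneg : ∀ h : (-1 : SL2R) ∈ ThetaGroup, χ ⟨-1, h⟩ = 1)
    (s : ℂ) (fa fb : ℝ → V) :
    ((∀ x : ℝ, -1 < x →
        fa x = χ k1⁻¹ (fa (x + 2))
          + ((((x + 2) ^ 2 : ℝ) : ℂ) ^ (-s)) • χ k2 (fa (-1 / (x + 2)) + fb (-1 / (x + 2)))) ∧
     (∀ x : ℝ, x < 1 →
        fb x = ((((x - 2) ^ 2 : ℝ) : ℂ) ^ (-s)) • χ k3 (fa (-1 / (x - 2)) + fb (-1 / (x - 2)))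
          + χ k1 (fb (x - 2))))
    ↔
    (let fc : ℝ → V := fun x => fa x + (((x ^ 2 : ℝ) : ℂ) ^ (-s)) • χ k4 (fb (-1 / x))
     (∀ x : ℝ, -1 < x →
        fa x = ((((x + 2) ^ 2 : ℝ) : ℂ) ^ (-s)) • χ k2 (fa (-1 / (x + 2)))
          + χ k1⁻¹ (fc (x + 2))) ∧
     (∀ x : ℝ, x < 1 →
        fb x = ((((x - 2) ^ 2 : ℝ) : ℂ) ^ (-s)) • χ k3 (fb (-1 / (x - 2)) + fc (-1 / (x - 2)))) ∧
     (∀ x : ℝ, 0 < x →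
        fc x = fa x + (((x ^ 2 : ℝ) : ℂ) ^ (-s)) • χ k4 (fb (-1 / x)))) := by
  have hk2 : ∀ v : V, χ k2 v = χ k1⁻¹ (χ k4 v) := by
    intro v
    have h : χ k2 = χ k1⁻¹ * χ k4 := by rw [k2, _root_.map_mul]
    rw [h]; rfl
  have hSmat : Smat * Smat = (-1 : SL2R) := by
    ext i j
    rw [Matrix.SpecialLinearGroup.coe_mul]
    fin_cases i <;> fin_cases j <;>
      simp [Smat, Matrix.mul_apply, Fin.sum_univ_two]
  have hmem : (-1 : SL2R) ∈ ThetaGroup := by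
    rw [← hSmat]; exact mul_mem k4.2 k4.2
  have hk44 : k4 * k4 = (⟨-1, hmem⟩ : ThetaGroup) := Subtype.ext hSmat
  have hk34 : ∀ v : V, χ k3 (χ k4 v) = χ k1 v := by
    intro v
    have h1 : χ k3 (χ k4 v) = χ (k3 * k4) v := by rw [_root_.map_mul]; rfl
    rw [h1, k3, mul_assoc, hk44, _root_.map_mul, hχneg hmem]
    rfl
  have hsc : ∀ x : ℝ, x - 2 ≠ 0 →
      ((((x - 2) ^ 2 : ℝ) : ℂ) ^ (-s)) * ((((-1 / (x - 2)) ^ 2 : ℝ) : ℂ) ^ (-s)) = 1 := by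
    intro x hne
    rw [← Complex.mul_cpow_ofReal_nonneg (sq_nonneg _) (sq_nonneg _), ← Complex.ofReal_mul]
    have h : (x - 2) ^ 2 * (-1 / (x - 2)) ^ 2 = 1 := by field_simp
    rw [h, Complex.ofReal_one, Complex.one_cpow]
  constructor
  · rintro ⟨hRa, hRb⟩
    intro fc
    have hfc : ∀ x : ℝ, fc x = fa x + (((x ^ 2 : ℝ) : ℂ) ^ (-s)) • χ k4 (fb (-1 / x)) :=
      fun x => rfl
    refine ⟨?_, ?_, fun x _ => hfc x⟩
    · intro x hx
      rw [hRa x hx, hfc (x + 2)]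
      simp only [_root_.map_add, _root_.map_smul, smul_add, hk2]
      abel
    · intro x hx
      have hne : x - 2 ≠ 0 := by linarith
      have hinv : -1 / (-1 / (x - 2)) = x - 2 := by field_simp
      rw [hRb x hx, hfc (-1 / (x - 2)), hinv]
      simp only [_root_.map_add, _root_.map_smul, smul_add, hk34, smul_smul, hsc x hne, one_smul]
      abel
  · intro h
    obtain ⟨hEa, hEb, -⟩ := h
    constructor
    · intro x hx
      rw [hEa x hx]
      simp only [_root_.map_add, _root_.map_smul, smul_add, hk2]
      abel
    · intro x hx
      have hne : x - 2 ≠ 0 := by linarith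
      have hinv : -1 / (-1 / (x - 2)) = x - 2 := by field_simp
      rw [hEb x hx]
      simp only [hinv, _root_.map_add, _root_.map_smul, smul_add, hk34, smul_smul, hsc x hne,
        one_smul]
      abel
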